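/- In the Moran process with exponential fitness under the Grafen assortment model, the ratio of fixation probabilities equals ρ^C/ρ^D = exp(w·((N-1)/2)·[(R - P + S - T) + r(R - P - S + T)]). -/

import Mathlib

lemma gauss_icc (n : ℕ) : ∑ i ∈ Finset.Icc 1 n, (i : ℝ) = n * (n + 1) / 2 := by
  induction n with
  | zero => simp
  | succ k ih =>
      rw [Finset.sum_Icc_succ_top (by omega), ih]
      push_cast; ring

/-- Closed form for the ratio of fixation probabilities in the Grafen model. -/
theorem fixation_ratio_closed_form (N : ℕ) (R S T P w r : ℝ)
    (hN : 2 ≤ N) (hw : 0 < w) (hr : r ∈ Set.Icc (0 : ℝ) 1) :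
    ∏ i ∈ Finset.Icc 1 (N - 1),
        Real.exp (w * (r * R + (1 - r) * ((i * R + ((N : ℝ) - i) * S) / N)))
      / Real.exp (w * (r * P + (1 - r) * ((i * T + ((N : ℝ) - i) * P) / N)))
      = Real.exp (w * (((N : ℝ) - 1) / 2) * ((R - P + S - T) + r * (R - P - S + T))) := by
  have hN0 : (0 : ℝ) < (N : ℝ) := by exact_mod_cast (by omega : 0 < N)
  have hNne : (N : ℝ) ≠ 0 := ne_of_gt hN0
  set c : ℝ := w * (r * (R - P) + (1 - r) * (S - P)) with hc
  set d : ℝ := w * ((1 - r) / N * ((R - T) - (S - P))) with hd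
  have h1 : ∀ i ∈ Finset.Icc 1 (N - 1),
      Real.exp (w * (r * R + (1 - r) * ((i * R + ((N : ℝ) - i) * S) / N)))
        / Real.exp (w * (r * P + (1 - r) * ((i * T + ((N : ℝ) - i) * P) / N)))
        = Real.exp (c + d * i) := by
    intro i hi
    rw [← Real.exp_sub]
    congr 1
    rw [hc, hd]
    field_simp
    ring
  rw [Finset.prod_congr rfl h1, ← Real.exp_sum]
  congr 1
  rw [Finset.sum_add_distrib, Finset.sum_const, ← Finset.mul_sum, gauss_icc, Nat.card_Icc,
    nsmul_eq_mul]
  have hcast : ((N - 1 + 1 - 1 : ℕ) : ℝ) = (N : ℝ) - 1 := by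
    have : N - 1 + 1 - 1 = N - 1 := by omega
    rw [this, Nat.cast_sub (by omega)]; simp
  have hcast2 : ((N - 1 : ℕ) : ℝ) = (N : ℝ) - 1 := by
    rw [Nat.cast_sub (by omega)]; simp
  rw [hcast, hcast2, hc, hd]
  field_simp
  ring
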